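/- arXiv:math/0505102 — 4 statements merged into one kernel-verified Lean document; each statement's English description precedes it below -/
import Mathlib

section
/- Let V be a finite-dimensional complex vector space with a nondegenerate alternating bilinear form ω, and let sp(V,ω) = {X ∈ End(V) : ω(Xu,w) + ω(u,Xw) = 0 for all u,w}. Then for every nonzero v ∈ V, the subspace {X v : X ∈ sp(V,ω)} equals all of V. -/
/-- For a nondegenerate alternating form `ω` on `V`, the symplectic Lie algebra
moves every nonzero vector in all directions: `{X v : X ∈ sp(V,ω)} = V` for `v ≠ 0`. -/
theorem stmt3 {V : Type*} [AddCommGroup V] [Module ℂ V] [FiniteDimensional ℂ V]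
    (ω : V →ₗ[ℂ] V →ₗ[ℂ] ℂ) (halt : ∀ u : V, ω u u = 0)
    (hnd : ∀ u : V, (∀ w : V, ω u w = 0) → u = 0) :
    ∀ v : V, v ≠ 0 →
      {w : V | ∃ X : V →ₗ[ℂ] V, (∀ u u' : V, ω (X u) u' + ω u (X u') = 0) ∧ X v = w}
        = Set.univ := by
  -- skew-symmetry from the alternating hypothesis
  have hsk : ∀ a b : V, ω a b = -ω b a := by
    intro a b
    have h := halt (a + b)
    simp only [map_add, LinearMap.add_apply, halt] at h
    linear_combination h
  intro v hv
  ext w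
  simp only [Set.mem_setOf_eq, Set.mem_univ, iff_true]
  -- find u0 with ω u0 v ≠ 0
  obtain ⟨u0, hu0⟩ : ∃ u0 : V, ω v u0 ≠ 0 := by
    by_contra h
    push_neg at h
    exact hv (hnd v h)
  set c : ℂ := ω u0 v with hc
  have hcne : c ≠ 0 := by
    rw [hc, hsk u0 v]
    simpa using hu0
  refine ⟨c⁻¹ • ((ω u0).smulRight w + (ω w).smulRight u0)
      + (-(ω w v) / (c * c)) • (ω u0).smulRight u0, ?_, ?_⟩
  · intro u u'
    simp only [LinearMap.add_apply, LinearMap.smul_apply, LinearMap.smulRight_apply,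
      map_add, map_smul, smul_eq_mul]
    rw [hsk u w, hsk u u0]
    ring
  · simp only [LinearMap.add_apply, LinearMap.smul_apply, LinearMap.smulRight_apply, ← hc]
    match_scalars <;> field_simp <;> ring
end

section
/- For every n ≥ 2 there exists an antisymmetric n×n complex matrix S₀ such that {A S₀ + S₀ Aᵀ : A upper triangular n×n} equals the full space of antisymmetric n×n complex matrices. -/
open Finset

def S0 (n : ℕ) : Matrix (Fin n) (Fin n) ℂ :=
  Matrix.of fun i j => (if (i:ℕ)+1 = (j:ℕ) then (1:ℂ) else 0) - (if (j:ℕ)+1 = (i:ℕ) then 1 else 0)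

lemma S0_anti (n : ℕ) : (S0 n).transpose = -(S0 n) := by
  ext i j
  simp [S0, Matrix.transpose_apply]

noncomputable def aFun (n : ℕ) (m : ℕ → ℕ → ℂ) (i k : ℕ) : ℂ :=
  if hk : k < n then
    if h1 : i < k then m i (k+1) + aFun n m i (k+2)
    else if h2 : i = k then m i (i+1) + aFun n m i (i+2) - aFun n m (i+1) (i+1)
    else 0
  else 0
termination_by (n - i) + (n - k)
decreasing_by all_goals omega

lemma aFun_lower (n : ℕ) (m : ℕ → ℕ → ℂ) {i k : ℕ} (h : k < i) : aFun n m i k = 0 := by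
  rw [aFun]; split_ifs <;> first | rfl | omega

lemma aFun_big (n : ℕ) (m : ℕ → ℕ → ℂ) {i k : ℕ} (h : n ≤ k) : aFun n m i k = 0 := by
  rw [aFun]; split_ifs <;> first | rfl | omega

lemma aFun_rec1 (n : ℕ) (m : ℕ → ℕ → ℂ) {i k : ℕ} (h1 : i < k) (h2 : k < n) :
    aFun n m i k = m i (k+1) + aFun n m i (k+2) := by
  rw [aFun]; split_ifs <;> first | rfl | omega

lemma aFun_rec2 (n : ℕ) (m : ℕ → ℕ → ℂ) {i : ℕ} (h : i < n) :
    aFun n m i i = m i (i+1) + aFun n m i (i+2) - aFun n m (i+1) (i+1) := by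
  rw [aFun]; split_ifs <;> first | rfl | omega

lemma sum_pred (n j : ℕ) (f : ℕ → ℂ) :
    (∑ k ∈ Finset.range n, if k + 1 = j then f k else 0) =
      if 1 ≤ j ∧ j - 1 < n then f (j - 1) else 0 := by
  rcases j with _ | p
  · simp
  · have h1 : ∀ k ∈ Finset.range n, (if k + 1 = p + 1 then f k else 0)
        = if k = p then f k else 0 := by
      intro k _; simp
    rw [Finset.sum_congr rfl h1, Finset.sum_ite_eq' (Finset.range n) p f]
    by_cases hp : p < n
    · rw [if_pos (Finset.mem_range.2 hp), if_pos ⟨by omega, by simpa⟩]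
      simp
    · rw [if_neg (by simpa using hp), if_neg (by simp; omega)]

lemma sum_succ (n j : ℕ) (f : ℕ → ℂ) (hf : ∀ k, n ≤ k → f k = 0) :
    (∑ k ∈ Finset.range n, if j + 1 = k then f k else 0) = f (j + 1) := by
  have h1 : ∀ k ∈ Finset.range n, (if j + 1 = k then f k else 0)
      = if k = j + 1 then f k else 0 := by
    intro k _; simp [eq_comm]
  rw [Finset.sum_congr rfl h1, Finset.sum_ite_eq' (Finset.range n) (j+1) f]
  by_cases h : j + 1 < n
  · rw [if_pos (Finset.mem_range.2 h)]
  · rw [if_neg (by simpa using h), hf _ (by omega)]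

lemma entry_calc {n : ℕ} (m : ℕ → ℕ → ℂ) (i j : Fin n) :
    ((Matrix.of fun p q : Fin n => aFun n m p q) * S0 n
      + S0 n * (Matrix.of fun p q : Fin n => aFun n m p q).transpose) i j
    = ((if 1 ≤ (j:ℕ) ∧ (j:ℕ) - 1 < n then aFun n m i ((j:ℕ)-1) else 0) - aFun n m i ((j:ℕ)+1))
      + (aFun n m j ((i:ℕ)+1)
          - (if 1 ≤ (i:ℕ) ∧ (i:ℕ) - 1 < n then aFun n m j ((i:ℕ)-1) else 0)) := by
  have hA : ∀ p q : Fin n,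
      (Matrix.of fun p q : Fin n => aFun n m p q) p q = aFun n m p q := fun _ _ => rfl
  rw [Matrix.add_apply, Matrix.mul_apply, Matrix.mul_apply]
  have e1 : (∑ k : Fin n, (Matrix.of fun p q : Fin n => aFun n m p q) i k * S0 n k j)
      = (∑ k ∈ Finset.range n, if k + 1 = (j:ℕ) then aFun n m i k else 0)
        - (∑ k ∈ Finset.range n, if (j:ℕ) + 1 = k then aFun n m i k else 0) := by
    rw [← Finset.sum_sub_distrib]
    rw [← Fin.sum_univ_eq_sum_range (fun k => (if k + 1 = (j:ℕ) then aFun n m i k else 0)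
        - (if (j:ℕ) + 1 = k then aFun n m i k else 0)) n]
    apply Finset.sum_congr rfl
    intro k _
    simp only [hA, S0, Matrix.of_apply, mul_sub, mul_ite, mul_one, mul_zero]
  have e2 : (∑ k : Fin n, S0 n i k * ((Matrix.of fun p q : Fin n => aFun n m p q).transpose) k j)
      = (∑ k ∈ Finset.range n, if (i:ℕ) + 1 = k then aFun n m j k else 0)
        - (∑ k ∈ Finset.range n, if k + 1 = (i:ℕ) then aFun n m j k else 0) := by
    rw [← Finset.sum_sub_distrib]
    rw [← Fin.sum_univ_eq_sum_range (fun k => (if (i:ℕ) + 1 = k then aFun n m j k else 0)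
        - (if k + 1 = (i:ℕ) then aFun n m j k else 0)) n]
    apply Finset.sum_congr rfl
    intro k _
    simp only [Matrix.transpose_apply, hA, S0, Matrix.of_apply, sub_mul, ite_mul, one_mul, zero_mul]
  rw [e1, e2, sum_pred n (j:ℕ) (fun k => aFun n m i k),
    sum_succ n (j:ℕ) (fun k => aFun n m i k) (fun k hk => aFun_big n m hk),
    sum_succ n (i:ℕ) (fun k => aFun n m j k) (fun k hk => aFun_big n m hk),
    sum_pred n (i:ℕ) (fun k => aFun n m j k)]

lemma anti_of {n : ℕ} (S A : Matrix (Fin n) (Fin n) ℂ) (hS : S.transpose = -S) :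
    (A * S + S * A.transpose).transpose = -(A * S + S * A.transpose) := by
  rw [Matrix.transpose_add, Matrix.transpose_mul, Matrix.transpose_mul,
    Matrix.transpose_transpose, hS, Matrix.neg_mul, Matrix.mul_neg, neg_add]
  abel

/-- For `n ≥ 2` there is an antisymmetric `S₀` with
`{A S₀ + S₀ Aᵀ : A upper triangular}` equal to the space of antisymmetric matrices. -/
theorem stmt7 {n : ℕ} (hn : 2 ≤ n) :
    ∃ S₀ : Matrix (Fin n) (Fin n) ℂ, S₀.transpose = -S₀ ∧
      {M : Matrix (Fin n) (Fin n) ℂ |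
        ∃ A : Matrix (Fin n) (Fin n) ℂ,
          (∀ i j : Fin n, (j : ℕ) < (i : ℕ) → A i j = 0) ∧
          M = A * S₀ + S₀ * A.transpose}
      = {M : Matrix (Fin n) (Fin n) ℂ | M.transpose = -M} := by
  classical
  refine ⟨S0 n, S0_anti n, ?_⟩
  ext M
  simp only [Set.mem_setOf_eq]
  constructor
  · rintro ⟨A, hA, rfl⟩
    exact anti_of _ _ (S0_anti n)
  · intro hM
    set m : ℕ → ℕ → ℂ :=
      fun p q => if h : p < n ∧ q < n then M ⟨p, h.1⟩ ⟨q, h.2⟩ else 0 with hmdef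
    have hm : ∀ p q : Fin n, m (p:ℕ) (q:ℕ) = M p q := by
      intro p q
      simp only [hmdef, dif_pos (And.intro p.isLt q.isLt)]
    refine ⟨Matrix.of fun p q : Fin n => aFun n m p q,
      fun i j h => aFun_lower n m h, ?_⟩
    set R := (Matrix.of fun p q : Fin n => aFun n m p q) * S0 n
        + S0 n * (Matrix.of fun p q : Fin n => aFun n m p q).transpose with hR
    have hRa : R.transpose = -R := anti_of _ _ (S0_anti n)
    have key : ∀ i j : Fin n, (i:ℕ) < (j:ℕ) → M i j = R i j := by
      intro i j hij
      rw [hR, entry_calc m i j]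
      have hjn : (j:ℕ) < n := j.isLt
      have hin : (i:ℕ) < n := i.isLt
      have hlast : (if 1 ≤ (i:ℕ) ∧ (i:ℕ) - 1 < n then aFun n m (j:ℕ) ((i:ℕ)-1) else 0) = 0 := by
        split_ifs with h
        · exact aFun_lower n m (by omega)
        · rfl
      rw [hlast, if_pos (by omega : 1 ≤ (j:ℕ) ∧ (j:ℕ) - 1 < n)]
      rcases eq_or_lt_of_le (by omega : (i:ℕ) + 1 ≤ (j:ℕ)) with hcase | hcase
      · -- j = i + 1
        have h1 : (j:ℕ) - 1 = (i:ℕ) := by omega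
        rw [h1, ← hcase, aFun_rec2 n m hin]
        have h2 : m (i:ℕ) ((i:ℕ)+1) = M i j := by
          rw [hcase]; exact hm i j
        rw [h2]
        ring
      · -- i + 1 < j
        have h0 : aFun n m (j:ℕ) ((i:ℕ)+1) = 0 := aFun_lower n m hcase
        have h1 : aFun n m (i:ℕ) ((j:ℕ)-1)
            = m (i:ℕ) ((j:ℕ)-1+1) + aFun n m (i:ℕ) ((j:ℕ)-1+2) :=
          aFun_rec1 n m (by omega) (by omega)
        have h2 : (j:ℕ) - 1 + 1 = (j:ℕ) := by omega
        have h3 : (j:ℕ) - 1 + 2 = (j:ℕ) + 1 := by omega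
        rw [h1, h2, h3, h0, hm i j]
        ring
    ext i j
    rcases lt_trichotomy ((i:ℕ)) ((j:ℕ)) with h | h | h
    · exact key i j h
    · have hij : i = j := Fin.ext h
      subst hij
      have h1 : M i i = -(M i i) := by
        have := congrFun (congrFun hM i) i
        simpa [Matrix.transpose_apply] using this
      have h2 : R i i = -(R i i) := by
        have := congrFun (congrFun hRa i) i
        simpa [Matrix.transpose_apply] using this
      have h1' : M i i = 0 := by
        have : (2:ℂ) * M i i = 0 := by linear_combination h1
        simpa using this
      have h2' : R i i = 0 := by
        have : (2:ℂ) * R i i = 0 := by linear_combination h2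
        simpa using this
      rw [h1', h2']
    · have h1 : M i j = -(M j i) := by
        have := congrFun (congrFun hM j) i
        simpa [Matrix.transpose_apply] using this
      have h2 : R i j = -(R j i) := by
        have := congrFun (congrFun hRa j) i
        simpa [Matrix.transpose_apply] using this
      rw [h1, h2, key j i h]
end

section
/- For every n ≥ 1 there exist a Borel subalgebra b of gl(n,ℂ), a vector v ∈ ℂⁿ and a covector φ ∈ (ℂⁿ)* such that {(Xv + sv, −φ∘X + sφ) : X ∈ b, s ∈ ℂ} = ℂⁿ ⊕ (ℂⁿ)*. -/
attribute [local instance 100] LieRing.ofAssociativeRing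

open Matrix

namespace Stmt9Aux




variable {n : ℕ}

/-- entries vanish when `j < i + d` -/
def band (d : ℕ) (X : Matrix (Fin n) (Fin n) ℂ) : Prop :=
  ∀ i j : Fin n, (j : ℕ) < (i : ℕ) + d → X i j = 0

lemma band.mono {d e : ℕ} (h : d ≤ e) {X : Matrix (Fin n) (Fin n) ℂ} (hX : band e X) :
    band d X := fun i j hij => hX i j (lt_of_lt_of_le hij (by omega))

lemma band.mul {d e : ℕ} {X Y : Matrix (Fin n) (Fin n) ℂ} (hX : band d X) (hY : band e Y) :
    band (d + e) (X * Y) := by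
  intro i j hij
  rw [Matrix.mul_apply]
  apply Finset.sum_eq_zero
  intro k _
  by_cases hk : (k : ℕ) < (i : ℕ) + d
  · rw [hX i k hk, zero_mul]
  · rw [hY k j (by omega), mul_zero]

lemma band.bracket {d : ℕ} {X Y : Matrix (Fin n) (Fin n) ℂ} (hX : band d X) (hY : band d Y) :
    band (d + 1) ⁅X, Y⁆ := by
  rcases Nat.eq_zero_or_pos d with rfl | hd
  · intro i j hij
    rw [Ring.lie_def, Matrix.sub_apply]
    rcases lt_or_eq_of_le (Nat.lt_succ_iff.mp (show (j:ℕ) < (i:ℕ) + 1 by omega)) with h | h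
    · rw [hX.mul hY i j (by omega), hY.mul hX i j (by omega), sub_zero]
    · have hji : j = i := Fin.ext h
      subst hji
      rw [Matrix.mul_apply, Matrix.mul_apply]
      rw [Finset.sum_eq_single j (fun k _ hk => ?_) (by simp), 
          Finset.sum_eq_single j (fun k _ hk => ?_) (by simp), mul_comm, sub_self]
      · rcases lt_or_gt_of_ne (fun h => hk (Fin.ext h)) with h | h
        · rw [hY j k (by omega), zero_mul]
        · rw [hX k j (by omega), mul_zero]
      · rcases lt_or_gt_of_ne (fun h => hk (Fin.ext h)) with h | h
        · rw [hX j k (by omega), zero_mul]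
        · rw [hY k j (by omega), mul_zero]
  · intro i j hij
    rw [Ring.lie_def, Matrix.sub_apply, hX.mul hY i j (by omega), hY.mul hX i j (by omega),
      sub_zero]

/-- The Borel subalgebra of upper triangular matrices. -/
def borel (n : ℕ) : LieSubalgebra ℂ (Matrix (Fin n) (Fin n) ℂ) where
  carrier := {X | band 0 X}
  add_mem' := fun {a b} ha hb i j hij => by
    rw [Matrix.add_apply, ha i j hij, hb i j hij, add_zero]
  zero_mem' := fun i j _ => rfl
  smul_mem' := fun c {X} hX i j hij => by
    rw [Matrix.smul_apply, hX i j hij, smul_zero]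
  lie_mem' := fun {X Y} hX hY i j hij => (hX.bracket hY).mono (by omega) i j hij

lemma mem_borel {X : Matrix (Fin n) (Fin n) ℂ} : X ∈ borel n ↔ band 0 X := Iff.rfl

lemma derived_band (k : ℕ) (x : borel n) (hx : x ∈ LieAlgebra.derivedSeries ℂ (borel n) k) :
    band k (x : Matrix (Fin n) (Fin n) ℂ) := by
  induction k generalizing x with
  | zero => exact x.2
  | succ k ih =>
    rw [LieAlgebra.derivedSeries_def, LieAlgebra.derivedSeriesOfIdeal_succ,
      ← LieSubmodule.mem_toSubmodule, LieSubmodule.lieIdeal_oper_eq_linear_span'] at hx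
    rw [← LieAlgebra.derivedSeries_def] at hx
    refine Submodule.span_induction ?_ ?_ ?_ ?_ hx
    · rintro m ⟨a, ha, b, hb, rfl⟩
      have := (ih a ha).bracket (ih b hb)
      simpa using this
    · intro i j _; simp
    · intro a b _ _ ha hb i j hij
      have : ((a + b : borel n) : Matrix (Fin n) (Fin n) ℂ) = a + b := rfl
      rw [this, Matrix.add_apply, ha i j hij, hb i j hij, add_zero]
    · intro c a _ ha i j hij
      have : ((c • a : borel n) : Matrix (Fin n) (Fin n) ℂ) = c • (a : Matrix (Fin n) (Fin n) ℂ) := rfl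
      rw [this, Matrix.smul_apply, ha i j hij, smul_zero]

instance borel_solvable : LieAlgebra.IsSolvable (borel n) := by
  rw [LieAlgebra.isSolvable_iff (R := ℂ)]
  refine ⟨n, ?_⟩
  rw [LieSubmodule.eq_bot_iff]
  intro m hm
  have := derived_band n m hm
  ext i j : 2
  exact this i j (by omega)






abbrev E (a b : Fin n) : Matrix (Fin n) (Fin n) ℂ := Matrix.single a b 1

lemma E_apply_ne {p q x y : Fin n} (h : x ≠ p ∨ y ≠ q) : E p q x y = 0 :=
  Matrix.single_apply_of_ne p q 1 x y
    (fun hc => h.elim (fun hne => hne hc.1.symm) (fun hne => hne hc.2.symm))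

lemma coe_smul_c {c : LieSubalgebra ℂ (Matrix (Fin n) (Fin n) ℂ)} (t : ℂ) (x : c) :
    ((t • x : c) : Matrix (Fin n) (Fin n) ℂ) = t • (x : Matrix (Fin n) (Fin n) ℂ) := rfl

lemma lieE_apply (a : Fin n) (M : Matrix (Fin n) (Fin n) ℂ) (x y : Fin n) :
    ⁅E a a, M⁆ x y = (if x = a then M a y else 0) - (if y = a then M x a else 0) := by
  rw [Ring.lie_def, Matrix.sub_apply]
  congr 1
  · by_cases hx : x = a
    · subst hx; simp [E]
    · simp [E, hx]
  · by_cases hy : y = a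
    · subst hy; simp [E]
    · simp [E, hy]

lemma P_apply (a : Fin n) (M : Matrix (Fin n) (Fin n) ℂ) (x y : Fin n) :
    (⁅E a a, ⁅E a a, M⁆⁆ + ⁅E a a, M⁆) x y =
      if x = a then 2 * (M a y - if y = a then M a a else 0) else 0 := by
  rw [Matrix.add_apply, lieE_apply, lieE_apply, lieE_apply, lieE_apply]
  by_cases hx : x = a <;> by_cases hy : y = a <;> simp [hx, hy] <;> ring

lemma Q_apply (a : Fin n) (M : Matrix (Fin n) (Fin n) ℂ) (x y : Fin n) :
    (⁅E a a, ⁅E a a, M⁆⁆ - ⁅E a a, M⁆) x y =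
      if y = a then 2 * (M x a - if x = a then M a a else 0) else 0 := by
  rw [Matrix.sub_apply, lieE_apply, lieE_apply, lieE_apply, lieE_apply]
  by_cases hx : x = a <;> by_cases hy : y = a <;> simp [hx, hy] <;> ring

lemma projector (p q : Fin n) (hpq : p ≠ q) (M : Matrix (Fin n) (Fin n) ℂ) :
    ⁅E q q, ⁅E q q, ⁅E p p, ⁅E p p, M⁆⁆ + ⁅E p p, M⁆⁆⁆ -
      ⁅E q q, ⁅E p p, ⁅E p p, M⁆⁆ + ⁅E p p, M⁆⁆ = (4 * M p q) • E p q := by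
  ext x y
  simp only [Q_apply, P_apply, Matrix.smul_apply]
  by_cases hy : y = q
  · by_cases hx : x = p
    · simp [E, hx, hy, hpq, hpq.symm]
      ring
    · simp [hx, hy, hpq, hpq.symm, E_apply_ne (Or.inl hx)]
  · simp [hy, E_apply_ne (Or.inr hy)]

lemma Epq_mem (c : LieSubalgebra ℂ (Matrix (Fin n) (Fin n) ℂ))
    (hdiag : ∀ a : Fin n, E a a ∈ c) {M : Matrix (Fin n) (Fin n) ℂ} (hM : M ∈ c)
    (p q : Fin n) (hpq : p ≠ q) (hne : M p q ≠ 0) : E p q ∈ c := by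
  have h4 : (4 * M p q) • E p q ∈ c := by
    rw [← projector p q hpq M]
    have h1 : ⁅E p p, ⁅E p p, M⁆⁆ + ⁅E p p, M⁆ ∈ c :=
      c.add_mem (c.lie_mem (hdiag p) (c.lie_mem (hdiag p) hM)) (c.lie_mem (hdiag p) hM)
    exact Submodule.sub_mem _ (c.lie_mem (hdiag q) (c.lie_mem (hdiag q) h1))
      (c.lie_mem (hdiag q) h1)
  have := c.smul_mem (4 * M p q)⁻¹ h4
  rwa [smul_smul, inv_mul_cancel₀ (by simpa using hne), one_smul] at this

lemma sl2_not_solvable (c : LieSubalgebra ℂ (Matrix (Fin n) (Fin n) ℂ))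
    (p q : Fin n) (hpq : p ≠ q) (he : E q p ∈ c) (hf : E p q ∈ c) :
    ¬ LieAlgebra.IsSolvable c := by
  intro hs
  -- matrix identities
  have hh : (⁅E q p, E p q⁆ : Matrix (Fin n) (Fin n) ℂ) = E q q - E p p := by
    rw [Ring.lie_def, Matrix.single_mul_single_same, Matrix.single_mul_single_same, mul_one]

  have hhe : (⁅E q q - E p p, E q p⁆ : Matrix (Fin n) (Fin n) ℂ) = (2 : ℂ) • E q p := by
    have e1 : E p p * E q p = (0 : Matrix (Fin n) (Fin n) ℂ) :=
      Matrix.single_mul_single_of_ne (c := 1) p p q hpq 1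
    have e2 : E q p * E q q = (0 : Matrix (Fin n) (Fin n) ℂ) :=
      Matrix.single_mul_single_of_ne (c := 1) q p q hpq 1
    have e3 : E q q * E q p = E q p := by
      rw [Matrix.single_mul_single_same, one_mul]
    have e4 : E q p * E p p = E q p := by
      rw [Matrix.single_mul_single_same, mul_one]
    rw [Ring.lie_def, sub_mul, mul_sub, e1, e2, e3, e4, sub_zero, zero_sub, sub_neg_eq_add,
      two_smul]
  have hhf : (⁅E q q - E p p, E p q⁆ : Matrix (Fin n) (Fin n) ℂ) = (-2 : ℂ) • E p q := by
    have e1 : E q q * E p q = (0 : Matrix (Fin n) (Fin n) ℂ) :=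
      Matrix.single_mul_single_of_ne (c := 1) q q p hpq.symm 1
    have e2 : E p q * E p p = (0 : Matrix (Fin n) (Fin n) ℂ) :=
      Matrix.single_mul_single_of_ne (c := 1) p q p hpq.symm 1
    have e3 : E p p * E p q = E p q := by
      rw [Matrix.single_mul_single_same, one_mul]
    have e4 : E p q * E q q = E p q := by
      rw [Matrix.single_mul_single_same, mul_one]
    rw [Ring.lie_def, sub_mul, mul_sub, e1, e2, e3, e4, zero_sub, sub_zero, neg_smul, two_smul,
      neg_add]
    abel
  set e : c := ⟨E q p, he⟩
  set f : c := ⟨E p q, hf⟩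
  have hhm : E q q - E p p ∈ c := by rw [← hh]; exact c.lie_mem he hf
  set h : c := ⟨E q q - E p p, hhm⟩
  have key : ∀ k, e ∈ LieAlgebra.derivedSeries ℂ c k ∧ f ∈ LieAlgebra.derivedSeries ℂ c k ∧
      h ∈ LieAlgebra.derivedSeries ℂ c k := by
    intro k
    induction k with
    | zero => exact ⟨LieSubmodule.mem_top _, LieSubmodule.mem_top _, LieSubmodule.mem_top _⟩
    | succ k ih =>
      obtain ⟨ihe, ihf, ihh⟩ := ih
      have hsucc : LieAlgebra.derivedSeries ℂ c (k + 1) =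
          ⁅LieAlgebra.derivedSeries ℂ c k, LieAlgebra.derivedSeries ℂ c k⁆ := by
        rw [LieAlgebra.derivedSeries_def, LieAlgebra.derivedSeriesOfIdeal_succ,
          ← LieAlgebra.derivedSeries_def]
      have hh' : h ∈ LieAlgebra.derivedSeries ℂ c (k + 1) := by
        have : h = ⁅e, f⁆ := by
          apply Subtype.ext
          rw [LieSubalgebra.coe_bracket]
          exact hh.symm
        rw [this, hsucc]
        exact LieSubmodule.lie_mem_lie ihe ihf
      have he' : e ∈ LieAlgebra.derivedSeries ℂ c (k + 1) := by
        have : e = (2 : ℂ)⁻¹ • ⁅h, e⁆ := by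
          apply Subtype.ext
          rw [coe_smul_c, LieSubalgebra.coe_bracket, hhe, smul_smul]
          norm_num
          rfl
        rw [this]
        have mem : ⁅h, e⁆ ∈ LieAlgebra.derivedSeries ℂ c (k + 1) := by
          rw [hsucc]; exact LieSubmodule.lie_mem_lie ihh ihe
        rw [← LieSubmodule.mem_toSubmodule] at mem ⊢
        exact Submodule.smul_mem _ _ mem
      have hf' : f ∈ LieAlgebra.derivedSeries ℂ c (k + 1) := by
        have : f = (-2 : ℂ)⁻¹ • ⁅h, f⁆ := by
          apply Subtype.ext
          rw [coe_smul_c, LieSubalgebra.coe_bracket, hhf, smul_smul]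
          norm_num
          rfl
        rw [this]
        have mem : ⁅h, f⁆ ∈ LieAlgebra.derivedSeries ℂ c (k + 1) := by
          rw [hsucc]; exact LieSubmodule.lie_mem_lie ihh ihf
        rw [← LieSubmodule.mem_toSubmodule] at mem ⊢
        exact Submodule.smul_mem _ _ mem
      exact ⟨he', hf', hh'⟩
  obtain ⟨k, hk⟩ := (LieAlgebra.isSolvable_iff ℂ _).mp hs
  have := (key k).1
  rw [hk, LieSubmodule.mem_bot] at this
  have : E q p = (0 : Matrix (Fin n) (Fin n) ℂ) := congrArg Subtype.val this
  have h1 := congrFun (congrFun this q) p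
  simp [E] at h1


lemma E_mem_borel {a b : Fin n} (h : a ≤ b) : E a b ∈ borel n := by
  intro i j hij
  refine E_apply_ne ?_
  by_cases hi : i = a
  · right
    intro hj
    subst hi; subst hj
    exact absurd hij (by simpa using h)
  · exact Or.inl hi

lemma borel_maximal (c : LieSubalgebra ℂ (Matrix (Fin n) (Fin n) ℂ))
    (hc : LieAlgebra.IsSolvable c) (hbc : borel n ≤ c) : c = borel n := by
  by_contra hne
  have hcb : ¬ (c : Set (Matrix (Fin n) (Fin n) ℂ)) ⊆ borel n := by
    intro h
    exact hne (le_antisymm h hbc)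
  obtain ⟨y, hyc, hyb⟩ := Set.not_subset.mp hcb
  have hex : ∃ p q : Fin n, (q : ℕ) < (p : ℕ) ∧ y p q ≠ 0 := by
    by_contra h
    push_neg at h
    exact hyb (fun i j hij => h i j (by omega))
  obtain ⟨p, q, hqp, hy0⟩ := hex
  have hpq : p ≠ q := fun h => by simp [h] at hqp
  have hdiag : ∀ a : Fin n, E a a ∈ c := fun a => hbc (E_mem_borel le_rfl)
  have hf : E p q ∈ c := Epq_mem c hdiag hyc p q hpq hy0
  have he : E q p ∈ c := hbc (E_mem_borel (le_of_lt (by exact hqp)))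
  exact sl2_not_solvable c p q hpq he hf hc

end Stmt9Aux

/-- There exist a Borel subalgebra `b` of `gl(n,ℂ)` (a maximal solvable Lie
subalgebra), `v ∈ ℂⁿ` and `φ ∈ (ℂⁿ)*` such that
`{(Xv + s•v, -φ∘X + s•φ) : X ∈ b, s ∈ ℂ} = ℂⁿ ⊕ (ℂⁿ)*`. -/
theorem stmt9 (n : ℕ) (hn : 1 ≤ n) :
    ∃ b : LieSubalgebra ℂ (Matrix (Fin n) (Fin n) ℂ),
      LieAlgebra.IsSolvable b ∧
      (∀ c : LieSubalgebra ℂ (Matrix (Fin n) (Fin n) ℂ),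
        LieAlgebra.IsSolvable c → b ≤ c → c = b) ∧
      ∃ (v : Fin n → ℂ) (φ : (Fin n → ℂ) →ₗ[ℂ] ℂ),
        ∀ (w : Fin n → ℂ) (ψ : (Fin n → ℂ) →ₗ[ℂ] ℂ),
          ∃ X ∈ b, ∃ s : ℂ,
            X.mulVec v + s • v = w ∧ s • φ - φ ∘ₗ X.mulVecLin = ψ := by
  classical
  refine ⟨Stmt9Aux.borel n, Stmt9Aux.borel_solvable, Stmt9Aux.borel_maximal, ?_⟩
  refine ⟨Pi.single (⟨n - 1, by omega⟩ : Fin n) 1,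
    (LinearMap.proj (⟨0, hn⟩ : Fin n) : (Fin n → ℂ) →ₗ[ℂ] ℂ) +
      (LinearMap.proj (⟨n - 1, by omega⟩ : Fin n) : (Fin n → ℂ) →ₗ[ℂ] ℂ), ?_⟩
  intro w ψ
  set i0 : Fin n := ⟨0, hn⟩ with hi0
  set iN : Fin n := ⟨n - 1, by omega⟩ with hiN
  set ψf : Fin n → ℂ := fun j => ψ (Pi.single j 1) with hψf
  set d : ℂ := if i0 = iN then 2 else 1 with hd
  set s : ℂ := (ψf iN + w i0 + w iN) / (2 * d) with hs
  set X : Matrix (Fin n) (Fin n) ℂ := Matrix.of fun i j =>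
    if j = iN then (w i - if i = iN then s else 0)
    else if i = i0 then ((if j = i0 then s else 0) - ψf j) else 0 with hX
  -- key scalar identity
  have hd0 : d ≠ 0 := by rw [hd]; split <;> norm_num
  have key : ∀ j : Fin n,
      s * ((if j = i0 then (1:ℂ) else 0) + (if j = iN then 1 else 0)) - (X i0 j + X iN j)
        = ψf j := by
    intro j
    by_cases hj : j = iN
    · subst hj
      by_cases h0 : i0 = iN
      · have hd2 : d = 2 := by rw [hd, if_pos h0]
        have hj0 : (iN : Fin n) = i0 := h0.symm
        simp only [hX, Matrix.of_apply, if_pos rfl, if_pos h0, hj0, if_pos rfl, if_true, if_false]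
        rw [hs, hd2]
        have hw : w i0 = w iN := by rw [h0]
        field_simp
        ring_nf
        rw [h0]
        ring
      · have hd1 : d = 1 := by rw [hd, if_neg h0]
        simp only [hX, Matrix.of_apply, if_pos rfl, if_neg h0, if_neg (Ne.symm (h0 ∘ Eq.symm)), if_true, if_false]
        rw [hs, hd1]
        have : (if (iN : Fin n) = i0 then (1:ℂ) else 0) = 0 := by
          rw [if_neg (fun h => h0 h.symm)]
        rw [this]
        field_simp
        ring
    · have h0 : i0 ≠ iN := by
        intro h
        apply hj
        have h1 : (0 : ℕ) = n - 1 := congrArg Fin.val h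
        exact Fin.ext (by omega)
      have hXiN : X iN j = 0 := by
        simp [hX, hj, Ne.symm h0]
      have hXi0 : X i0 j = (if j = i0 then s else 0) - ψf j := by
        simp [hX, hj]
      rw [hXiN, hXi0, if_neg hj]
      by_cases hji : j = i0 <;> simp [hji] <;> ring
  -- membership in borel
  have hmem : ∀ i j : Fin n, (j : ℕ) < (i : ℕ) → X i j = 0 := by
    intro i j hij
    have hjN : j ≠ iN := by
      intro h
      have : (j : ℕ) = n - 1 := congrArg Fin.val h
      omega
    have hi0' : i ≠ i0 := by
      intro h
      have : (i : ℕ) = 0 := congrArg Fin.val h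
      omega
    simp [hX, hjN, hi0']
  -- first equation
  have eq1 : X.mulVec (Pi.single iN 1) + s • (Pi.single iN 1 : Fin n → ℂ) = w := by
    funext i
    have hmv : X.mulVec (Pi.single iN 1) i = X i iN := by
      simp [Matrix.mulVec, dotProduct, Pi.single_apply, Finset.sum_ite_eq']
    simp only [Pi.add_apply, Pi.smul_apply, hmv, smul_eq_mul, Pi.single_apply]
    by_cases hi : i = iN
    · simp [hX, hi]
    · simp [hX, hi]
  -- second equation
  set φ : (Fin n → ℂ) →ₗ[ℂ] ℂ := (LinearMap.proj i0 : (Fin n → ℂ) →ₗ[ℂ] ℂ) + (LinearMap.proj iN : (Fin n → ℂ) →ₗ[ℂ] ℂ) with hφ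
  have eq2 : s • φ - φ ∘ₗ X.mulVecLin = ψ := by
    apply LinearMap.pi_ext
    intro j x
    have h1 : (Pi.single j x : Fin n → ℂ) = x • (Pi.single j 1 : Fin n → ℂ) := by
      rw [← Pi.single_smul, smul_eq_mul, mul_one]
    rw [h1, _root_.map_smul, _root_.map_smul]
    have h2 : ψ (Pi.single j 1) = ψf j := rfl
    rw [h2]
    have h3 : (s • φ - φ ∘ₗ X.mulVecLin) (Pi.single j 1)
        = s * ((if j = i0 then (1:ℂ) else 0) + (if j = iN then 1 else 0)) - (X i0 j + X iN j) := by
      simp only [LinearMap.sub_apply, LinearMap.smul_apply, LinearMap.comp_apply,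
        Matrix.mulVecLin_apply, hφ, LinearMap.add_apply, LinearMap.proj_apply,
        Pi.single_apply, smul_eq_mul]
      have hmv0 : X.mulVec (Pi.single j 1) i0 = X i0 j := by
        simp [Matrix.mulVec, dotProduct, Pi.single_apply, Finset.sum_ite_eq']
      have hmvN : X.mulVec (Pi.single j 1) iN = X iN j := by
        simp [Matrix.mulVec, dotProduct, Pi.single_apply, Finset.sum_ite_eq']
      rw [hmv0, hmvN]
      congr 2 <;> simp [eq_comm]
    rw [h3, key j]
  exact ⟨X, fun i j hij => hmem i j (by omega), s, eq1, eq2⟩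
end

section
/- For every n ≥ 1, let h ⊆ sl(n+1,ℂ) be the image of the embedding gl(n,ℂ) → sl(n+1,ℂ), A ↦ diag(A, −tr A) (block upper-left embedding with compensating lower-right entry). Then there exists a Borel subalgebra b of sl(n+1,ℂ) such that b + h = sl(n+1,ℂ). -/
open Matrix

attribute [local instance 100] LieRing.ofAssociativeRing

abbrev Mat (m : ℕ) := Matrix (Fin m) (Fin m) ℂ

/-- The lower-triangular trace-zero matrices, as a Lie subalgebra. -/
def lowT (m : ℕ) : LieSubalgebra ℂ (Mat m) where
  carrier := {X | (∀ i j : Fin m, i < j → X i j = 0) ∧ X.trace = 0}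
  add_mem' := by
    rintro X Y ⟨hX, hX0⟩ ⟨hY, hY0⟩
    exact ⟨fun i j hij => by simp [hX i j hij, hY i j hij],
      by simp [Matrix.trace_add, hX0, hY0]⟩
  zero_mem' := by simp
  smul_mem' := by
    rintro t X ⟨hX, hX0⟩
    exact ⟨fun i j hij => by simp [hX i j hij], by simp [hX0]⟩
  lie_mem' := by
    rintro X Y ⟨hX, hX0⟩ ⟨hY, hY0⟩
    refine ⟨fun i j hij => ?_, ?_⟩
    · rw [Ring.lie_def, Matrix.sub_apply, Matrix.mul_apply, Matrix.mul_apply]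
      have h1 : ∀ l : Fin m, X i l * Y l j = 0 := by
        intro l
        by_cases h : i < l
        · simp [hX i l h]
        · have : l < j := lt_of_le_of_lt (not_lt.mp h) hij
          simp [hY l j this]
      have h2 : ∀ l : Fin m, Y i l * X l j = 0 := by
        intro l
        by_cases h : i < l
        · simp [hY i l h]
        · have : l < j := lt_of_le_of_lt (not_lt.mp h) hij
          simp [hX l j this]
      simp [h1, h2]
    · rw [Ring.lie_def]
      simp [Matrix.trace_sub, Matrix.trace_mul_comm X Y]

lemma mem_lowT {m : ℕ} {X : Mat m} :
    X ∈ lowT m ↔ (∀ i j : Fin m, i < j → X i j = 0) ∧ X.trace = 0 := Iff.rfl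


/-- The strict filtration condition. -/
def Ck (m k : ℕ) (X : Mat m) : Prop := ∀ i j : Fin m, (i : ℕ) < (j : ℕ) + k → X i j = 0

lemma Ck_lie₀ {m k : ℕ} {X Y : Mat m} (hX : Ck m 0 X) (hY : Ck m k Y) :
    Ck m k ⁅X, Y⁆ := by
  intro i j hij
  rw [Ring.lie_def, Matrix.sub_apply, Matrix.mul_apply, Matrix.mul_apply]
  have h1 : ∀ l : Fin m, X i l * Y l j = 0 := by
    intro l
    by_cases h : (i : ℕ) < (l : ℕ)
    · simp [hX i l (by omega)]
    · simp [hY l j (by omega)]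
  have h2 : ∀ l : Fin m, Y i l * X l j = 0 := by
    intro l
    by_cases h : (i : ℕ) < (l : ℕ) + k
    · simp [hY i l h]
    · simp [hX l j (by omega)]
  simp [h1, h2]

lemma Ck_lie {m k : ℕ} {X Y : Mat m} (hX : Ck m k X) (hY : Ck m k Y) :
    Ck m (k + 1) ⁅X, Y⁆ := by
  intro i j hij
  rw [Ring.lie_def, Matrix.sub_apply, Matrix.mul_apply, Matrix.mul_apply]
  have key : ∀ l : Fin m, X i l * Y l j = Y i l * X l j := by
    intro l
    by_cases h1 : (i : ℕ) < (l : ℕ) + k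
    · rw [hX i l h1, hY i l h1, zero_mul, zero_mul]
    · by_cases h2 : (l : ℕ) < (j : ℕ) + k
      · rw [hY l j h2, hX l j h2, mul_zero, mul_zero]
      · have hk : k = 0 := by omega
        have hli : (l : ℕ) = (i : ℕ) := by omega
        have hlj : (l : ℕ) = (j : ℕ) := by omega
        have hli' : l = i := Fin.ext hli
        have hlj' : l = j := Fin.ext hlj
        subst hli'
        subst hlj'
        exact mul_comm _ _
  rw [Finset.sum_congr rfl (fun l _ => key l), sub_self]

/-- The filtration as Lie ideals of the lower triangular algebra. -/
def Nk (m k : ℕ) : LieIdeal ℂ (lowT m) where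
  carrier := {x : lowT m | Ck m k (x : Mat m)}
  add_mem' := by
    intro x y hx hy i j hij
    have : ((x + y : lowT m) : Mat m) = (x : Mat m) + (y : Mat m) := rfl
    rw [this, Matrix.add_apply, hx i j hij, hy i j hij, add_zero]
  zero_mem' := by intro i j hij; rfl
  smul_mem' := by
    intro t x hx i j hij
    have : ((t • x : lowT m) : Mat m) = t • (x : Mat m) := rfl
    rw [this, Matrix.smul_apply, hx i j hij, smul_zero]
  lie_mem := by
    intro x y hy
    have hx : Ck m 0 (x : Mat m) := fun i j hij => ((mem_lowT).mp x.2).1 i j (by omega)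
    have : ((⁅x, y⁆ : lowT m) : Mat m) = ⁅(x : Mat m), (y : Mat m)⁆ :=
      LieSubalgebra.coe_bracket _ _ _
    intro i j hij
    rw [this]
    exact Ck_lie₀ hx hy i j hij

lemma mem_Nk {m k : ℕ} {x : lowT m} : x ∈ Nk m k ↔ Ck m k (x : Mat m) := Iff.rfl

lemma derivedSeries_le_Nk (m : ℕ) : ∀ k, LieAlgebra.derivedSeries ℂ (lowT m) k ≤ Nk m k := by
  intro k
  induction k with
  | zero =>
    intro x _
    exact fun i j hij => ((mem_lowT).mp x.2).1 i j (by omega)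
  | succ k ih =>
    rw [LieAlgebra.derivedSeries_def, LieAlgebra.derivedSeriesOfIdeal_succ]

    have h2 : ⁅Nk m k, Nk m k⁆ ≤ Nk m (k + 1) := by
      rw [LieSubmodule.lie_le_iff]
      intro x hx y hy
      rw [mem_Nk]
      have hco : ((⁅x, y⁆ : lowT m) : Mat m) = ⁅(x : Mat m), (y : Mat m)⁆ :=
        LieSubalgebra.coe_bracket _ _ _
      rw [hco]
      exact Ck_lie hx hy
    exact le_trans (LieSubmodule.mono_lie ih ih) h2

instance lowT_solvable (m : ℕ) : LieAlgebra.IsSolvable (lowT m) := by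
  rw [LieAlgebra.isSolvable_iff (R := ℂ)]
  refine ⟨m, ?_⟩
  rw [eq_bot_iff]
  intro x hx
  have h := derivedSeries_le_Nk m m hx
  rw [mem_Nk] at h
  have : (x : Mat m) = 0 := by
    ext i j
    exact h i j (by omega)
  simpa [LieSubmodule.mem_bot] using Subtype.ext this


lemma diag_lie_apply {m : ℕ} (d : Fin m → ℂ) (X : Mat m) (i j : Fin m) :
    ⁅Matrix.diagonal d, X⁆ i j = (d i - d j) * X i j := by
  rw [Ring.lie_def, Matrix.sub_apply, Matrix.diagonal_mul, Matrix.mul_diagonal]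
  ring

/-- Iterated application of `ad D - t`. -/
def sweep {m : ℕ} (D : Mat m) : List ℂ → Mat m → Mat m
  | [], X => X
  | t :: ts, X => ⁅D, sweep D ts X⁆ - t • sweep D ts X

lemma sweep_mem {m : ℕ} (c : LieSubalgebra ℂ (Mat m)) {D X : Mat m}
    (hD : D ∈ c) (hX : X ∈ c) : ∀ ts : List ℂ, sweep D ts X ∈ c := by
  intro ts
  induction ts with
  | nil => exact hX
  | cons t ts ih =>
    exact c.toSubmodule.sub_mem (c.lie_mem hD ih) (c.toSubmodule.smul_mem t ih)

lemma sweep_apply {m : ℕ} (d : Fin m → ℂ) (ts : List ℂ) (X : Mat m) (i j : Fin m) :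
    sweep (Matrix.diagonal d) ts X i j = (ts.map (fun t => d i - d j - t)).prod * X i j := by
  induction ts with
  | nil => simp [sweep]
  | cons t ts ih =>
    rw [sweep, Matrix.sub_apply, diag_lie_apply, Matrix.smul_apply, ih]
    rw [List.map_cons, List.prod_cons]
    ring_nf

/-- If a subalgebra contains `E i j` and `E j i` for `i ≠ j`, it is not solvable. -/
lemma not_solvable_of_pair {m : ℕ} (c : LieSubalgebra ℂ (Mat m)) (i j : Fin m) (hij : i ≠ j)
    (hE : Matrix.single i j 1 ∈ c) (hF : Matrix.single j i 1 ∈ c) :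
    ¬ LieAlgebra.IsSolvable c := by
  intro hs
  set e : Mat m := Matrix.single i j 1 with he
  set f : Mat m := Matrix.single j i 1 with hf
  have hef : e * f = Matrix.single i i 1 := by
    rw [he, hf, Matrix.single_mul_single_same, one_mul]
  have hfe : f * e = Matrix.single j j 1 := by
    rw [he, hf, Matrix.single_mul_single_same, one_mul]
  have hlie_ef : ⁅e, f⁆ = Matrix.single i i 1 - Matrix.single j j 1 := by
    rw [Ring.lie_def, hef, hfe]
  have hhe : ⁅⁅e, f⁆, e⁆ = (2 : ℂ) • e := by
    rw [hlie_ef, Ring.lie_def]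
    rw [Matrix.sub_mul, Matrix.mul_sub]
    rw [he]
    rw [Matrix.single_mul_single_same, Matrix.single_mul_single_of_ne (h := Ne.symm hij),
      Matrix.single_mul_single_of_ne (h := Ne.symm hij), Matrix.single_mul_single_same]
    rw [sub_zero, zero_sub, sub_neg_eq_add, two_smul]
    simp
  have hhf : ⁅⁅e, f⁆, f⁆ = (-2 : ℂ) • f := by
    rw [hlie_ef, Ring.lie_def]
    rw [Matrix.sub_mul, Matrix.mul_sub]
    rw [hf]
    rw [Matrix.single_mul_single_same, Matrix.single_mul_single_of_ne (h := hij),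
      Matrix.single_mul_single_of_ne (h := hij), Matrix.single_mul_single_same]
    rw [zero_sub, sub_zero, neg_smul, two_smul]
    simp
    abel
  -- elements of the subalgebra
  set eh : c := ⟨e, hE⟩
  set fh : c := ⟨f, hF⟩
  set hh : c := ⁅eh, fh⁆
  have key : ∀ k, eh ∈ LieAlgebra.derivedSeries ℂ c k ∧ fh ∈ LieAlgebra.derivedSeries ℂ c k ∧
      hh ∈ LieAlgebra.derivedSeries ℂ c k := by
    intro k
    induction k with
    | zero => exact ⟨LieSubmodule.mem_top _, LieSubmodule.mem_top _, LieSubmodule.mem_top _⟩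
    | succ k ih =>
      obtain ⟨ihe, ihf, ihh⟩ := ih
      rw [LieAlgebra.derivedSeries_def, LieAlgebra.derivedSeriesOfIdeal_succ]
      refine ⟨?_, ?_, ?_⟩
      · have : eh = (2 : ℂ)⁻¹ • ⁅hh, eh⁆ := by
          apply Subtype.ext
          show (e : Mat m) = (2 : ℂ)⁻¹ • (⁅⁅e, f⁆, e⁆ : Mat m)
          rw [hhe, smul_smul]
          norm_num
        rw [this]
        exact Submodule.smul_mem _ _ (LieSubmodule.lie_mem_lie ihh ihe)
      · have : fh = (-2 : ℂ)⁻¹ • ⁅hh, fh⁆ := by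
          apply Subtype.ext
          show (f : Mat m) = (-2 : ℂ)⁻¹ • (⁅⁅e, f⁆, f⁆ : Mat m)
          rw [hhf, smul_smul]
          norm_num
        rw [this]
        exact Submodule.smul_mem _ _ (LieSubmodule.lie_mem_lie ihh ihf)
      · exact LieSubmodule.lie_mem_lie ihe ihf
  obtain ⟨k, hk⟩ := (LieAlgebra.isSolvable_iff (R := ℂ) (L := c)).mp hs
  have := (key k).1
  rw [hk, LieSubmodule.mem_bot] at this
  have : e = 0 := congrArg Subtype.val this
  have h1 : e i j = 1 := Matrix.single_apply_same i j 1
  rw [this] at h1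
  simp at h1

lemma stdBasis_lower_mem {m : ℕ} {i j : Fin m} (hij : i < j) :
    Matrix.single j i 1 ∈ lowT m := by
  rw [mem_lowT]
  constructor
  · intro a b hab
    apply Matrix.single_apply_of_ne
    rintro ⟨rfl, rfl⟩
    exact absurd hij (not_lt.mpr hab.le)
  · rw [Matrix.trace]
    apply Finset.sum_eq_zero
    intro x _
    show Matrix.single j i 1 x x = 0
    apply Matrix.single_apply_of_ne
    rintro ⟨rfl, rfl⟩
    exact lt_irrefl _ hij

lemma diagonal_mem_lowT {m : ℕ} (d : Fin m → ℂ) (hd : (∑ k, d k) = 0) :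
    Matrix.diagonal d ∈ lowT m := by
  rw [mem_lowT]
  constructor
  · intro a b hab
    exact Matrix.diagonal_apply_ne d (ne_of_lt hab)
  · rwa [Matrix.trace_diagonal]

theorem lowT_max (m : ℕ) (c : LieSubalgebra ℂ (Mat m)) (htr : ∀ X ∈ c, X.trace = 0)
    (hs : LieAlgebra.IsSolvable c) (hle : lowT m ≤ c) : c = lowT m := by
  refine le_antisymm ?_ hle
  intro X hX
  rw [mem_lowT]
  refine ⟨?_, htr X hX⟩
  by_contra hcon
  push_neg at hcon
  obtain ⟨i, j, hij, hXij⟩ := hcon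
  have hmpos : 0 < m := i.pos
  have hm0 : (m : ℂ) ≠ 0 := Nat.cast_ne_zero.mpr hmpos.ne'
  -- the generic diagonal element
  set S : ℂ := ∑ l : Fin m, ((l : ℕ) : ℂ) with hS
  set d : Fin m → ℂ := fun k => (m : ℂ) * ((k : ℕ) : ℂ) - S with hd
  have hDlow : Matrix.diagonal d ∈ lowT m := by
    apply diagonal_mem_lowT
    rw [hd]
    rw [Finset.sum_sub_distrib, ← Finset.mul_sum, ← hS, Finset.sum_const, Finset.card_univ,
      Fintype.card_fin, nsmul_eq_mul]
    ring
  have hDc : Matrix.diagonal d ∈ c := hle hDlow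
  set r0 : ℤ := ((i : ℕ) : ℤ) - ((j : ℕ) : ℤ) with hr0
  set ts : List ℂ :=
    (((Finset.Icc (-(m : ℤ)) (m : ℤ)).erase r0).toList).map (fun r : ℤ => (m : ℂ) * ((r : ℤ) : ℂ)) with hts
  set Y : Mat m := sweep (Matrix.diagonal d) ts X with hYdef
  have hYc : Y ∈ c := sweep_mem c hDc hX ts
  have hfac : ∀ (k l : Fin m) (r : ℤ),
      d k - d l - (m : ℂ) * (r : ℂ) = (m : ℂ) * (((((k : ℕ) : ℤ) - ((l : ℕ) : ℤ) - r : ℤ)) : ℂ) := by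
    intro k l r
    rw [hd]
    push_cast
    ring
  have hYapp : ∀ k l : Fin m, Y k l = ((ts.map (fun t => d k - d l - t)).prod) * X k l :=
    fun k l => sweep_apply d ts X k l
  -- vanishing off the stripe
  have claim1 : ∀ k l : Fin m, ((k : ℕ) : ℤ) - ((l : ℕ) : ℤ) ≠ r0 → Y k l = 0 := by
    intro k l hkl
    set r : ℤ := ((k : ℕ) : ℤ) - ((l : ℕ) : ℤ) with hr
    have hmem : r ∈ (Finset.Icc (-(m : ℤ)) (m : ℤ)).erase r0 := by
      rw [Finset.mem_erase]
      refine ⟨hkl, Finset.mem_Icc.mpr ⟨?_, ?_⟩⟩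
      · have := k.isLt; have := l.isLt; omega
      · have := k.isLt; have := l.isLt; omega
    have htmem : (m : ℂ) * (r : ℂ) ∈ ts := by
      rw [hts]
      exact List.mem_map.mpr ⟨r, Finset.mem_toList.mpr hmem, rfl⟩
    have hzero : (0 : ℂ) ∈ ts.map (fun t => d k - d l - t) := by
      refine List.mem_map.mpr ⟨(m : ℂ) * (r : ℂ), htmem, ?_⟩
      rw [hfac k l r, ← hr, sub_self, Int.cast_zero, mul_zero]
    rw [hYapp k l, List.prod_eq_zero hzero, zero_mul]
  -- nonvanishing at (i, j)
  have claim2 : Y i j ≠ 0 := by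
    rw [hYapp i j]
    apply mul_ne_zero _ hXij
    intro hzero
    rw [List.prod_eq_zero_iff] at hzero
    obtain ⟨t, ht, hteq⟩ := List.mem_map.mp hzero
    rw [hts] at ht
    obtain ⟨r, hrmem, rfl⟩ := List.mem_map.mp ht
    rw [hfac i j r, ← hr0] at hteq
    rcases mul_eq_zero.mp hteq with h | h
    · exact hm0 h
    · have : r0 - r = 0 := by exact_mod_cast h
      have : r = r0 := by omega
      exact (Finset.mem_erase.mp (Finset.mem_toList.mp hrmem)).1 this
  -- picking out the (i,j) entry
  set e1 : Fin m → Fin m → ℂ := fun a k => (m : ℂ) * (if k = a then 1 else 0) - 1 with he1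
  have hDa : ∀ a : Fin m, Matrix.diagonal (e1 a) ∈ lowT m := by
    intro a
    apply diagonal_mem_lowT
    rw [he1]
    simp [Finset.sum_sub_distrib, ← Finset.mul_sum, Finset.sum_ite_eq',
      Finset.sum_const, Finset.card_univ]
  have hDalie : ∀ (a : Fin m) (Z : Mat m) (k l : Fin m),
      ⁅Matrix.diagonal (e1 a), Z⁆ k l
        = (m : ℂ) * ((if k = a then (1:ℂ) else 0) - (if l = a then 1 else 0)) * Z k l := by
    intro a Z k l
    rw [diag_lie_apply, he1]
    ring
  set Z : Mat m := ⁅Matrix.diagonal (e1 j), Y⁆ with hZ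
  set W : Mat m := ⁅Matrix.diagonal (e1 i), Z⁆ with hW
  have hWc : W ∈ c := c.lie_mem (hle (hDa i)) (c.lie_mem (hle (hDa j)) hYc)
  have hWapp : ∀ k l : Fin m, W k l
      = (m : ℂ) * ((if k = i then (1:ℂ) else 0) - (if l = i then 1 else 0))
        * ((m : ℂ) * ((if k = j then (1:ℂ) else 0) - (if l = j then 1 else 0)) * Y k l) := by
    intro k l
    rw [hW, hDalie, hZ, hDalie]
  have hijne : i ≠ j := ne_of_lt hij
  have hWij : W i j = -((m : ℂ) * (m : ℂ)) * Y i j := by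
    rw [hWapp i j, if_pos rfl, if_neg (Ne.symm hijne), if_neg hijne, if_pos rfl]
    ring
  have hWzero : ∀ k l : Fin m, ¬(k = i ∧ l = j) → W k l = 0 := by
    intro k l hkl
    by_cases hY0 : Y k l = 0
    · rw [hWapp, hY0]; ring
    · have hstripe : ((k : ℕ) : ℤ) - ((l : ℕ) : ℤ) = r0 := by
        by_contra hc
        exact hY0 (claim1 k l hc)
      by_cases hki : k = i
      · have hlj : l = j := by
          have : ((l : ℕ) : ℤ) = ((j : ℕ) : ℤ) := by rw [hki] at hstripe; rw [hr0] at hstripe; omega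
          exact Fin.ext (by exact_mod_cast this)
        exact absurd ⟨hki, hlj⟩ hkl
      · by_cases hli : l = i
        · have hkj : k ≠ j := by
            intro hkj
            rw [hkj, hli, hr0] at hstripe
            have hij' : (i : ℕ) < (j : ℕ) := hij
            omega
          have hlj : l ≠ j := fun h => hijne (hli.symm.trans h)
          rw [hWapp, if_neg hkj, if_neg hlj]
          ring
        · rw [hWapp, if_neg hki, if_neg hli]
          ring
  have hWval : W = (-((m : ℂ) * (m : ℂ)) * Y i j) • Matrix.single i j 1 := by
    ext k l
    by_cases hkl : k = i ∧ l = j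
    · obtain ⟨rfl, rfl⟩ := hkl
      rw [hWij]
      simp
    · rw [hWzero k l hkl, Matrix.smul_apply,
        Matrix.single_apply_of_ne (h := fun h => hkl ⟨h.1.symm, h.2.symm⟩)]
      simp
  have hscal : -((m : ℂ) * (m : ℂ)) * Y i j ≠ 0 :=
    mul_ne_zero (neg_ne_zero.mpr (mul_ne_zero hm0 hm0)) claim2
  have hE : Matrix.single i j 1 ∈ c := by
    have : Matrix.single i j 1 = (-((m : ℂ) * (m : ℂ)) * Y i j)⁻¹ • W := by
      rw [hWval, smul_smul, inv_mul_cancel₀ hscal, one_smul]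
    rw [this]
    exact c.toSubmodule.smul_mem _ hWc
  exact not_solvable_of_pair c i j hijne hE (hle (stdBasis_lower_mem hij)) hs

/-- Conjugation by an invertible matrix, as a morphism of Lie algebras. -/
noncomputable def conjHom {m : ℕ} (u v : Mat m) (hvu : v * u = 1) : Mat m →ₗ⁅ℂ⁆ Mat m where
  toFun X := u * X * v
  map_add' X Y := by noncomm_ring
  map_smul' t X := by simp [Matrix.mul_smul, Matrix.smul_mul]
  map_lie' {X Y} := by
    have hcan : ∀ W : Mat m, v * (u * W) = W := fun W => by rw [← mul_assoc, hvu, one_mul]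
    show u * ⁅X, Y⁆ * v = ⁅u * X * v, u * Y * v⁆
    simp only [Ring.lie_def, mul_sub, sub_mul, mul_assoc, hcan]

@[simp] lemma conjHom_apply {m : ℕ} (u v : Mat m) (hvu : v * u = 1) (X : Mat m) :
    conjHom u v hvu X = u * X * v := rfl

lemma conj_conj {m : ℕ} {u v : Mat m} (hvu : v * u = 1) (X : Mat m) :
    v * (u * X * v) * u = X := by
  simp only [← mul_assoc]
  rw [hvu, one_mul, mul_assoc, hvu, mul_one]

lemma solvable_map {m : ℕ} (f : Mat m →ₗ⁅ℂ⁆ Mat m) (c : LieSubalgebra ℂ (Mat m))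
    (hc : LieAlgebra.IsSolvable c) : LieAlgebra.IsSolvable (c.map f) := by
  haveI := hc
  have hsurj : Function.Surjective
      (fun x : c => (⟨f x, (LieSubalgebra.mem_map _ _ _).mpr ⟨x, x.2, rfl⟩⟩ : c.map f)) := by
    rintro ⟨y, hy⟩
    obtain ⟨x, hx, rfl⟩ := (LieSubalgebra.mem_map _ _ _).mp hy
    exact ⟨⟨x, hx⟩, rfl⟩
  exact Function.Surjective.lieAlgebra_isSolvable (f := {
    toFun := fun x : c => (⟨f x, (LieSubalgebra.mem_map _ _ _).mpr ⟨x, x.2, rfl⟩⟩ : c.map f)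
    map_add' := fun x y => Subtype.ext (by simp)
    map_smul' := fun t x => Subtype.ext (by
      show f (((t : ℂ) • x : c) : Mat m) = t • f ((x : c) : Mat m)
      rw [Submodule.coe_smul_of_tower]
      exact f.map_smul t (x : Mat m))
    map_lie' := fun {x y} => Subtype.ext (by
      show f ⁅(x : Mat m), (y : Mat m)⁆ = ⁅f x, f y⁆
      simp) }) hsurj

lemma conj_apply_entry {m : ℕ} (z p : Fin m) (L : Mat m) (k l : Fin m) :
    (((1 + Matrix.single z p 1) * L * (1 - Matrix.single z p 1) : Mat m)) k l
      = L k l + (if k = z then L p l else 0) - (if l = p then L k z else 0)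
        - (if k = z ∧ l = p then L p z else 0) := by
  have expand : (1 + Matrix.single z p 1) * L * (1 - Matrix.single z p 1)
      = L + Matrix.single z p 1 * L - (L * Matrix.single z p 1
        + Matrix.single z p 1 * L * Matrix.single z p 1) := by
    noncomm_ring
  rw [expand, Matrix.sub_apply, Matrix.add_apply, Matrix.add_apply]
  by_cases hk : k = z
  · subst hk
    by_cases hl : l = p
    · subst hl
      rw [Matrix.mul_single_apply_same,
        Matrix.mul_single_apply_same, Matrix.single_mul_apply_same,
        Matrix.single_mul_apply_same]
      simp
      ring
    · rw [Matrix.single_mul_apply_same,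
        Matrix.mul_single_apply_of_ne (hbj := hl),
        Matrix.mul_single_apply_of_ne (hbj := hl)]
      simp [hl]
  · by_cases hl : l = p
    · subst hl
      rw [Matrix.single_mul_apply_of_ne (h := hk),
        Matrix.mul_single_apply_same, Matrix.mul_single_apply_same,
        Matrix.single_mul_apply_of_ne (h := hk)]
      simp [hk]
    · rw [Matrix.single_mul_apply_of_ne (h := hk),
        Matrix.mul_single_apply_of_ne (hbj := hl),
        Matrix.mul_single_apply_of_ne (hbj := hl)]
      simp [hk, hl]

/-- For the image `h` of the embedding `gl(n,ℂ) → sl(n+1,ℂ)`,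
`A ↦ diag(A, -tr A)`, there is a Borel subalgebra `b` of `sl(n+1,ℂ)` (a maximal solvable
subalgebra consisting of trace-zero matrices) with `b + h = sl(n+1,ℂ)`. -/
theorem stmt16 (n : ℕ) (hn : 1 ≤ n) :
    ∃ b : LieSubalgebra ℂ (Matrix (Fin (n + 1)) (Fin (n + 1)) ℂ),
      (∀ X ∈ b, X.trace = 0) ∧
      LieAlgebra.IsSolvable b ∧
      (∀ c : LieSubalgebra ℂ (Matrix (Fin (n + 1)) (Fin (n + 1)) ℂ),
        (∀ X ∈ c, X.trace = 0) → LieAlgebra.IsSolvable c → b ≤ c → c = b) ∧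
      ∀ C : Matrix (Fin (n + 1)) (Fin (n + 1)) ℂ, C.trace = 0 →
        ∃ X ∈ b, ∃ Y : Matrix (Fin (n + 1)) (Fin (n + 1)) ℂ,
          ((∃ A : Matrix (Fin n) (Fin n) ℂ,
              (∀ i j : Fin n, Y i.castSucc j.castSucc = A i j) ∧
              Y (Fin.last n) (Fin.last n) = -A.trace ∧
              (∀ i : Fin n, Y i.castSucc (Fin.last n) = 0 ∧ Y (Fin.last n) i.castSucc = 0))) ∧
          C = X + Y := by
  set z : Fin (n + 1) := 0 with hz
  set p : Fin (n + 1) := Fin.last n with hp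
  have hzp : z ≠ p := by
    intro h
    have := congrArg Fin.val h
    simp [hz, hp, Fin.val_last] at this
    omega
  set N : Mat (n + 1) := Matrix.single z p 1 with hN
  have hNN : N * N = 0 := by
    rw [hN, Matrix.single_mul_single_of_ne (h := Ne.symm hzp)]
  set u : Mat (n + 1) := 1 + N with hu
  set v : Mat (n + 1) := 1 - N with hv
  have huv : u * v = 1 := by
    rw [hu, hv, add_mul, one_mul, mul_sub, mul_one, hNN, sub_zero, sub_add_cancel]
  have hvu : v * u = 1 := by
    rw [hu, hv, sub_mul, one_mul, mul_add, mul_one, hNN, add_zero, add_sub_cancel_right]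
  set Φ : Mat (n + 1) →ₗ⁅ℂ⁆ Mat (n + 1) := conjHom u v hvu with hPhi
  set Ψ : Mat (n + 1) →ₗ⁅ℂ⁆ Mat (n + 1) := conjHom v u huv with hPsi
  have hPsiPhi : ∀ X : Mat (n + 1), Ψ (Φ X) = X := by
    intro X
    rw [hPhi, hPsi, conjHom_apply, conjHom_apply]
    exact conj_conj hvu X
  have hPhiPsi : ∀ X : Mat (n + 1), Φ (Ψ X) = X := by
    intro X
    rw [hPhi, hPsi, conjHom_apply, conjHom_apply]
    exact conj_conj huv X
  refine ⟨(lowT (n + 1)).map Φ, ?_, ?_, ?_, ?_⟩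
  -- trace zero
  · intro X hX
    obtain ⟨T, hT, rfl⟩ := (LieSubalgebra.mem_map _ _ _).mp hX
    rw [hPhi, conjHom_apply, Matrix.trace_mul_cycle, hvu, one_mul]
    exact (mem_lowT.mp hT).2
  -- solvable
  · exact solvable_map Φ (lowT (n + 1)) (lowT_solvable (n + 1))
  -- maximal
  · intro c htrc hsc hbc
    have hle' : lowT (n + 1) ≤ c.map Ψ := by
      intro T hT
      refine (LieSubalgebra.mem_map _ _ _).mpr ⟨Φ T, ?_, hPsiPhi T⟩
      exact hbc ((LieSubalgebra.mem_map _ _ _).mpr ⟨T, hT, rfl⟩)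
    have htr' : ∀ X ∈ c.map Ψ, X.trace = 0 := by
      intro X hX
      obtain ⟨Z, hZ, rfl⟩ := (LieSubalgebra.mem_map _ _ _).mp hX
      rw [hPsi, conjHom_apply, Matrix.trace_mul_cycle, huv, one_mul]
      exact htrc Z hZ
    have hs' := solvable_map Ψ c hsc
    have hmax := lowT_max (n + 1) (c.map Ψ) htr' hs' hle'
    apply le_antisymm _ hbc
    intro Z hZ
    have hZ' : Ψ Z ∈ lowT (n + 1) := by
      rw [← hmax]
      exact (LieSubalgebra.mem_map _ _ _).mpr ⟨Z, hZ, rfl⟩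
    exact (LieSubalgebra.mem_map _ _ _).mpr ⟨Ψ Z, hZ', hPhiPsi Z⟩
  -- the decomposition b + h = sl
  · intro C hC
    set t0 : ℂ := (C p z + C z p) / 2 with ht0
    set L : Mat (n + 1) := Matrix.of (fun k l =>
      if k = z then (if l = z then -t0 else 0)
      else if k = p then (if l = p then t0 else C p l)
      else (if l = z then -C k p else 0)) with hL
    have hLapp : ∀ k l : Fin (n + 1), L k l =
        if k = z then (if l = z then -t0 else 0)
        else if k = p then (if l = p then t0 else C p l)
        else (if l = z then -C k p else 0) := fun k l => rfl
    have hLdiag : ∀ k : Fin (n + 1), L k k =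
        (if k = z then -t0 else 0) + (if k = p then t0 else 0) := by
      intro k
      rw [hLapp]
      by_cases hk : k = z
      · simp [hk, Ne.symm hzp, hzp]
      · by_cases hk' : k = p
        · simp [hk, hk', Ne.symm hzp]
        · simp [hk, hk']
    have hLmem : L ∈ lowT (n + 1) := by
      rw [mem_lowT]
      constructor
      · intro a b hab
        have hab' : (a : ℕ) < (b : ℕ) := hab
        have hbz : b ≠ z := by
          intro h
          rw [hz] at h
          have : (b : ℕ) = 0 := by rw [h]; rfl
          omega
        have hap : a ≠ p := by
          intro h
          have hbl : (b : ℕ) < n + 1 := b.isLt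
          have : (a : ℕ) = n := by rw [h, hp]; simp [Fin.val_last]
          omega
        rw [hLapp]
        by_cases haz : a = z
        · simp [haz, hbz]
        · simp [haz, hap, hbz]
      · rw [Matrix.trace]
        have : ∀ k : Fin (n + 1), Matrix.diag L k =
            (if k = z then -t0 else 0) + (if k = p then t0 else 0) := hLdiag
        rw [Finset.sum_congr rfl (fun k _ => this k), Finset.sum_add_distrib,
          Finset.sum_ite_eq' Finset.univ z (fun _ => -t0),
          Finset.sum_ite_eq' Finset.univ p (fun _ => t0)]
        simp
    set X : Mat (n + 1) := u * L * v with hX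
    have hXmem : X ∈ (lowT (n + 1)).map Φ :=
      (LieSubalgebra.mem_map _ _ _).mpr ⟨L, hLmem, rfl⟩
    have hXapp : ∀ k l : Fin (n + 1), X k l
        = L k l + (if k = z then L p l else 0) - (if l = p then L k z else 0)
          - (if k = z ∧ l = p then L p z else 0) := by
      intro k l
      rw [hX, hu, hv, hN]
      exact conj_apply_entry z p L k l
    have hXtrace : X.trace = 0 := by
      rw [hX, Matrix.trace_mul_cycle, hvu, one_mul]
      exact (mem_lowT.mp hLmem).2
    -- key entries of X
    have hXcol : ∀ i : Fin n, X i.castSucc p = C i.castSucc p := by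
      intro i
      have hicp : i.castSucc ≠ p := by
        rw [hp]
        exact ne_of_lt (Fin.castSucc_lt_last i)
      rw [hXapp]
      by_cases hicz : i.castSucc = z
      · rw [hicz, if_pos rfl, if_pos rfl, if_pos ⟨rfl, rfl⟩]
        rw [hLapp p p, hLapp z z, hLapp p z, hLapp z p]
        rw [if_neg (Ne.symm hzp), if_pos rfl, if_pos rfl, if_pos rfl, if_pos rfl,
          if_neg (Ne.symm hzp), if_pos rfl, if_neg hzp, if_neg (Ne.symm hzp)]
        rw [ht0]
        field_simp
        rw [if_pos trivial]
        ring
      · rw [if_neg hicz, if_pos rfl, if_neg (fun h => hicz h.1)]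
        rw [hLapp, hLapp, if_neg hicz, if_neg hicp, if_neg (Ne.symm hzp), if_neg hicz,
          if_neg hicp, if_pos rfl]
        ring
    have hXrow : ∀ i : Fin n, X p i.castSucc = C p i.castSucc := by
      intro i
      have hicp : i.castSucc ≠ p := by
        rw [hp]
        exact ne_of_lt (Fin.castSucc_lt_last i)
      rw [hXapp, if_neg (Ne.symm hzp), if_neg hicp, if_neg (fun h => (Ne.symm hzp) h.1)]
      rw [hLapp, if_neg (Ne.symm hzp), if_pos rfl, if_neg hicp]
      ring
    set Y : Mat (n + 1) := C - X with hY
    set A : Matrix (Fin n) (Fin n) ℂ := Matrix.of (fun i j => Y i.castSucc j.castSucc) with hA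
    refine ⟨X, hXmem, Y, ⟨A, fun i j => rfl, ?_, ?_⟩, by rw [hY]; abel⟩
    · -- corner condition
      have hsumC : (∑ i : Fin n, C i.castSucc i.castSucc) + C p p = 0 := by
        have := hC
        rw [Matrix.trace, Fin.sum_univ_castSucc] at this
        exact this
      have hsumX : (∑ i : Fin n, X i.castSucc i.castSucc) + X p p = 0 := by
        have := hXtrace
        rw [Matrix.trace, Fin.sum_univ_castSucc] at this
        exact this
      have hAtr : A.trace = ∑ i : Fin n, (C i.castSucc i.castSucc - X i.castSucc i.castSucc) := by
        rw [Matrix.trace]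
        apply Finset.sum_congr rfl
        intro i _
        rfl
      rw [hAtr, Finset.sum_sub_distrib]
      show C p p - X p p = _
      linear_combination hsumC - hsumX
    · intro i
      constructor
      · show C i.castSucc p - X i.castSucc p = 0
        rw [hXcol i, sub_self]
      · show C p i.castSucc - X p i.castSucc = 0
        rw [hXrow i, sub_self]
end
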